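/- Let A be a 3-dimensional cyclic Leibniz algebra over ℂ with generator a satisfying a·a³ = αa² + βa³ where α ≠ 0, and let s ∈ ℂ be a square root of α. Then x = (1/s)a is also a generator of A (i.e. {x, x², x³} is a basis of A) and x·x³ = x² + (β/s)x³. -/

import Mathlib

/-- `lpow μ x k` is the left-normed power `x^(k+1)`; so `lpow μ x 0 = x`,
`lpow μ x 1 = x·x = x²`, `lpow μ x 2 = x·x² = x³`, etc. -/
def lpow {A : Type*} [AddCommGroup A] [Module ℂ A]
    (μ : A →ₗ[ℂ] A →ₗ[ℂ] A) (x : A) : ℕ → A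
  | 0 => x
  | n + 1 => μ x (lpow μ x n)
/-- If A is a 3-dimensional cyclic Leibniz algebra over ℂ with generator a,
a·a³ = αa² + βa³ with α ≠ 0, and s² = α, then x = (1/s)a is also a generator of A and
x·x³ = x² + (β/s)x³. -/
theorem cyclic_dim3_normalize_alpha
    {A : Type*} [AddCommGroup A] [Module ℂ A]
    (μ : A →ₗ[ℂ] A →ₗ[ℂ] A)
    (hLeib : ∀ x y z : A, μ x (μ y z) = μ (μ x y) z + μ y (μ x z))
    (a : A) (b : Module.Basis (Fin 3) ℂ A) (hb : ∀ i : Fin 3, b i = lpow μ a (i : ℕ))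
    (α β s : ℂ) (hα : α ≠ 0) (hs : s ^ 2 = α)
    (hmul : μ a (lpow μ a 2) = α • lpow μ a 1 + β • lpow μ a 2) :
    (∃ e : Module.Basis (Fin 3) ℂ A, ∀ i : Fin 3, e i = lpow μ (s⁻¹ • a) (i : ℕ)) ∧
    μ (s⁻¹ • a) (lpow μ (s⁻¹ • a) 2) =
      lpow μ (s⁻¹ • a) 1 + (β / s) • lpow μ (s⁻¹ • a) 2 := by
  have hs0 : s ≠ 0 := by
    rintro rfl
    simp at hs
    exact hα hs.symm
  have h0 : lpow μ (s⁻¹ • a) 0 = s⁻¹ ^ 1 • lpow μ a 0 := by simp [lpow]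
  have h1 : lpow μ (s⁻¹ • a) 1 = s⁻¹ ^ 2 • lpow μ a 1 := by
    simp [lpow, smul_smul, pow_two]
  have h2 : lpow μ (s⁻¹ • a) 2 = s⁻¹ ^ 3 • lpow μ a 2 := by
    show μ (s⁻¹ • a) (lpow μ (s⁻¹ • a) 1) = _
    rw [h1]
    simp [lpow, smul_smul]
    module
  constructor
  · refine ⟨b.unitsSMul (fun i => (Units.mk0 s hs0)⁻¹ ^ ((i : ℕ) + 1)), ?_⟩
    intro i
    rw [Module.Basis.unitsSMul_apply, hb]
    fin_cases i <;>
      simp [Units.smul_def, Units.val_pow_eq_pow_val, inv_pow, h0, h1, h2]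
  · rw [show μ (s⁻¹ • a) (lpow μ (s⁻¹ • a) 2) = μ (s⁻¹ • a) (s⁻¹ ^ 3 • lpow μ a 2) by rw [h2],
      h1, h2]
    simp only [map_smul, LinearMap.smul_apply, hmul, smul_add, smul_smul]
    congr 1
    · congr 1
      rw [← hs]
      field_simp
    · congr 1
      rw [div_eq_mul_inv]
      ring
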